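/- Let f : ℝ → ℝ be measurable with ∫_ℝ (x² + 1)^{3/2} f(x)² dx < ∞ and ∫_ℝ f(x) dx = 0 (note that the weighted bound implies f ∈ L¹(ℝ)). Then the anti-derivative F(x) := ∫_{−∞}^{x} f(y) dy belongs to L²(ℝ), and there is an absolute constant C > 0 such that ‖F‖²_{L²(ℝ)} ≤ C ∫_ℝ (x² + 1)^{3/2} f(x)² dx. -/

import Mathlib

open Real MeasureTheory Filter Topology
open Set

lemma aux_deriv (y : ℝ) :
    HasDerivAt (fun t : ℝ => t / Real.sqrt (t^2+1)) ((y^2+1) ^ (-(3:ℝ)/2)) y := by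
  have hpos : (0:ℝ) < y^2+1 := by positivity
  have hs : (0:ℝ) < Real.sqrt (y^2+1) := Real.sqrt_pos.2 hpos
  have h1 : HasDerivAt (fun t : ℝ => t^2+1) (2*y) y := by
    simpa using ((hasDerivAt_pow 2 y).add_const 1)
  have h2 : HasDerivAt (fun t : ℝ => Real.sqrt (t^2+1)) (2*y / (2 * Real.sqrt (y^2+1))) y :=
    h1.sqrt (ne_of_gt hpos)
  have h3 := (hasDerivAt_id y).div h2 (ne_of_gt hs)
  refine h3.congr_deriv ?_; symm
  have hsq : Real.sqrt (y^2+1) ^ 2 = y^2+1 := Real.sq_sqrt hpos.le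
  have hv : (y^2+1) ^ (-(3:ℝ)/2) = ((y^2+1) * Real.sqrt (y^2+1))⁻¹ := by
    rw [show (-(3:ℝ)/2) = -(1 + 1/2) by norm_num, Real.rpow_neg hpos.le,
      Real.rpow_add hpos, Real.rpow_one, ← Real.sqrt_eq_rpow]
  rw [hv]
  simp only [id]
  field_simp
  linear_combination (-y^2) * hsq

lemma v_cont : Continuous (fun y : ℝ => (y^2+1) ^ (-(3:ℝ)/2)) := by
  apply Continuous.rpow_const (by continuity)
  intro x; left; positivity

lemma v_le (y : ℝ) : (y^2+1) ^ (-(3:ℝ)/2) ≤ (1+y^2)⁻¹ := by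
  have hpos : (0:ℝ) < y^2+1 := by positivity
  rw [show (-(3:ℝ)/2) = -(3/2) by norm_num, Real.rpow_neg hpos.le]
  rw [inv_le_inv₀ (by positivity) (by positivity)]
  calc (1:ℝ)+y^2 = (y^2+1) ^ (1:ℝ) := by rw [Real.rpow_one]; ring
    _ ≤ (y^2+1) ^ ((3:ℝ)/2) := by
        apply Real.rpow_le_rpow_of_exponent_le (by nlinarith [sq_nonneg y]) (by norm_num)

lemma v_integrable : Integrable (fun y : ℝ => (y^2+1) ^ (-(3:ℝ)/2)) := by
  apply (integrable_inv_one_add_sq).mono' v_cont.aestronglyMeasurable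
  filter_upwards with y
  rw [Real.norm_of_nonneg (by positivity)]
  exact v_le y

lemma tendsto_atBot : Tendsto (fun t : ℝ => t / Real.sqrt (t^2+1)) atBot (𝓝 (-1)) := by
  have h1 : Tendsto (fun t : ℝ => -Real.sqrt (1 - (t^2+1)⁻¹)) atBot (𝓝 (-1)) := by
    have h2 : Tendsto (fun t : ℝ => (t^2+1)⁻¹) atBot (𝓝 0) := by
      apply Tendsto.inv_tendsto_atTop
      apply tendsto_atTop_mono (f := fun t : ℝ => -t) ?_ tendsto_neg_atBot_atTop
      intro t; show -t ≤ t^2+1; nlinarith [sq_nonneg (t+1), sq_nonneg t]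
    have := ((continuous_sqrt.tendsto _).comp ((tendsto_const_nhds (x := (1:ℝ))).sub h2)).neg
    simpa using this
  apply h1.congr'
  filter_upwards [Iio_mem_atBot 0] with t (ht : t < 0)
  have hpos : (0:ℝ) < t^2+1 := by positivity
  rw [show 1 - (t^2+1)⁻¹ = t^2/(t^2+1) by field_simp; ring,
    Real.sqrt_div (by positivity) _, Real.sqrt_sq_eq_abs, abs_of_neg ht]
  ring

lemma tendsto_atTop' : Tendsto (fun t : ℝ => t / Real.sqrt (t^2+1)) atTop (𝓝 1) := by
  have h1 : Tendsto (fun t : ℝ => Real.sqrt (1 - (t^2+1)⁻¹)) atTop (𝓝 1) := by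
    have h2 : Tendsto (fun t : ℝ => (t^2+1)⁻¹) atTop (𝓝 0) := by
      apply Tendsto.inv_tendsto_atTop
      apply tendsto_atTop_add_const_right
      exact tendsto_pow_atTop (by norm_num)
    have := (continuous_sqrt.tendsto _).comp ((tendsto_const_nhds (x := (1:ℝ))).sub h2)
    simpa [Function.comp_def] using this
  apply h1.congr'
  filter_upwards [Ioi_mem_atTop 0] with t (ht : 0 < t)
  rw [show 1 - (t^2+1)⁻¹ = t^2/(t^2+1) by field_simp; ring,
    Real.sqrt_div (by positivity) _, Real.sqrt_sq_eq_abs, abs_of_pos ht]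

lemma tail_Iic {x : ℝ} (hx : x ≤ 0) :
    ∫ y in Iic x, (y^2+1) ^ (-(3:ℝ)/2) ≤ (x^2+1)⁻¹ := by
  have hpos : (0:ℝ) < x^2+1 := by positivity
  have hs : (0:ℝ) < Real.sqrt (x^2+1) := Real.sqrt_pos.2 hpos
  have hsq : Real.sqrt (x^2+1) ^ 2 = x^2+1 := Real.sq_sqrt hpos.le
  have heq : ∫ y in Iic x, (y^2+1) ^ (-(3:ℝ)/2)
      = x / Real.sqrt (x^2+1) - (-1) :=
    integral_Iic_of_hasDerivAt_of_tendsto' (fun y _ => aux_deriv y)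
      (v_integrable.integrableOn) tendsto_atBot
  rw [heq, sub_neg_eq_add]
  set s := Real.sqrt (x^2+1) with hsdef
  have hxs : -x ≤ s := by nlinarith [hs, hsq]
  rw [inv_eq_one_div, le_div_iff₀ hpos]
  have hrw : (x/s + 1) * (x^2+1) = (x*s + s^2) * (x^2+1) / s^2 := by
    rw [hsq]; field_simp; linear_combination (-x) * hsq
  rw [hrw, div_le_one (by positivity)]
  have h1 : x * s + x^2 ≤ 0 := by nlinarith [mul_nonneg (neg_nonneg.2 hx) (by linarith : (0:ℝ) ≤ s + x)]
  nlinarith [hpos, h1, hsq]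

lemma tail_Ioi {x : ℝ} (hx : 0 ≤ x) :
    ∫ y in Ioi x, (y^2+1) ^ (-(3:ℝ)/2) ≤ (x^2+1)⁻¹ := by
  have hpos : (0:ℝ) < x^2+1 := by positivity
  have hs : (0:ℝ) < Real.sqrt (x^2+1) := Real.sqrt_pos.2 hpos
  have hsq : Real.sqrt (x^2+1) ^ 2 = x^2+1 := Real.sq_sqrt hpos.le
  have heq : ∫ y in Ioi x, (y^2+1) ^ (-(3:ℝ)/2)
      = 1 - x / Real.sqrt (x^2+1) :=
    integral_Ioi_of_hasDerivAt_of_tendsto' (fun y _ => aux_deriv y)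
      (v_integrable.integrableOn) tendsto_atTop'
  rw [heq]
  set s := Real.sqrt (x^2+1) with hsdef
  have hxs : x ≤ s := by nlinarith [hs, hsq]
  rw [inv_eq_one_div, le_div_iff₀ hpos]
  have hrw : (1 - x/s) * (x^2+1) = (s^2 - x*s) * (x^2+1) / s^2 := by
    rw [hsq]; field_simp; linear_combination x * hsq
  rw [hrw, div_le_one (by positivity)]
  have h1 : x^2 - x * s ≤ 0 := by nlinarith [mul_nonneg hx (by linarith : (0:ℝ) ≤ s - x)]
  nlinarith [hpos, h1, hsq]

lemma rpow_half_sq {A : ℝ} (hA : 0 ≤ A) : (A ^ ((1:ℝ)/2))^2 = A := by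
  rw [← Real.rpow_natCast (A ^ ((1:ℝ)/2)) 2, ← Real.rpow_mul hA]
  norm_num

lemma cs_bound (f : ℝ → ℝ) (hf : Measurable f)
    (hI : Integrable (fun x => (x^2 + 1) ^ ((3:ℝ)/2) * (f x)^2))
    (s : Set ℝ) :
    (∫ y in s, f y)^2
      ≤ (∫ y in s, (y^2+1) ^ (-(3:ℝ)/2)) * ∫ x, (x^2+1) ^ ((3:ℝ)/2) * (f x)^2 := by
  set μ := (volume : Measure ℝ).restrict s with hμ
  set a : ℝ → ℝ := fun y => (y^2+1) ^ (-(3:ℝ)/4) with ha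
  set b : ℝ → ℝ := fun y => (y^2+1) ^ ((3:ℝ)/4) * |f y| with hb
  have hpos : ∀ y : ℝ, (0:ℝ) < y^2+1 := fun y => by positivity
  have hab : ∀ y, a y * b y = |f y| := by
    intro y
    rw [ha, hb]
    simp only
    rw [← mul_assoc, ← Real.rpow_add (hpos y)]
    norm_num
  have ha_cont : Continuous a := by
    apply Continuous.rpow_const (by continuity)
    intro y; left; positivity
  have hb_meas : Measurable b := by
    apply Measurable.mul _ hf.abs
    apply Continuous.measurable
    apply Continuous.rpow_const (by continuity)
    intro y; left; positivity
  have ha2 : ∀ y, a y ^ 2 = (y^2+1) ^ (-(3:ℝ)/2) := by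
    intro y
    rw [ha]; simp only
    rw [← Real.rpow_natCast ((y^2+1) ^ (-(3:ℝ)/4)) 2, ← Real.rpow_mul (hpos y).le]
    norm_num
  have hb2 : ∀ y, b y ^ 2 = (y^2+1) ^ ((3:ℝ)/2) * (f y)^2 := by
    intro y
    rw [hb]; simp only
    rw [mul_pow, ← Real.rpow_natCast ((y^2+1) ^ ((3:ℝ)/4)) 2, ← Real.rpow_mul (hpos y).le,
      sq_abs]
    norm_num
  have hbint : Integrable (fun y => b y ^ 2) μ := by
    refine Integrable.restrict ?_
    exact hI.congr (by filter_upwards with y using (hb2 y).symm)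
  have haint : Integrable (fun y => a y ^ 2) μ := by
    refine Integrable.restrict ?_
    exact v_integrable.congr (by filter_upwards with y using (ha2 y).symm)
  have haM : MemLp a (ENNReal.ofReal 2) μ := by
    rw [show ENNReal.ofReal 2 = 2 by norm_num [ENNReal.ofReal]]
    exact (memLp_two_iff_integrable_sq ha_cont.aestronglyMeasurable.restrict).2
      (haint.congr (by filter_upwards with y using by simp [Pi.pow_apply]))
  have hbM : MemLp b (ENNReal.ofReal 2) μ := by
    rw [show ENNReal.ofReal 2 = 2 by norm_num [ENNReal.ofReal]]
    exact (memLp_two_iff_integrable_sq hb_meas.aestronglyMeasurable.restrict).2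
      (hbint.congr (by filter_upwards with y using by simp [Pi.pow_apply]))
  have hconj : Real.HolderConjugate 2 2 := Real.HolderConjugate.two_two
  have holder := integral_mul_le_Lp_mul_Lq_of_nonneg hconj
    (Eventually.of_forall (fun y => by rw [ha]; positivity))
    (Eventually.of_forall (fun y => by rw [hb]; positivity)) haM hbM
  -- holder : ∫ a*b ∂μ ≤ (∫ a^(2:ℝ) ∂μ)^(1/2) * (∫ b^(2:ℝ) ∂μ)^(1/2)
  have hr2 : ∀ g : ℝ → ℝ, (∫ y, g y ^ (2:ℝ) ∂μ) = ∫ y, g y ^ 2 ∂μ := by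
    intro g
    refine integral_congr_ae (Eventually.of_forall fun y => ?_)
    show g y ^ (2:ℝ) = g y ^ (2:ℕ)
    rw [← Real.rpow_natCast (g y) 2]; norm_num
  rw [hr2 a, hr2 b] at holder
  have habs : |∫ y, f y ∂μ| ≤ ∫ y, a y * b y ∂μ := by
    calc |∫ y, f y ∂μ| ≤ ∫ y, |f y| ∂μ := by
          simpa [Real.norm_eq_abs] using norm_integral_le_integral_norm (μ := μ) f
      _ = ∫ y, a y * b y ∂μ := integral_congr_ae (Eventually.of_forall fun y => (hab y).symm)
  have hIa : (0:ℝ) ≤ ∫ y, a y ^ 2 ∂μ := integral_nonneg fun y => sq_nonneg _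
  have hIb : (0:ℝ) ≤ ∫ y, b y ^ 2 ∂μ := integral_nonneg fun y => sq_nonneg _
  have step : (∫ y, f y ∂μ)^2 ≤ (∫ y, a y ^ 2 ∂μ) * (∫ y, b y ^ 2 ∂μ) := by
    have h1 : (∫ y, f y ∂μ)^2 ≤ ((∫ y, a y ^ 2 ∂μ)^((1:ℝ)/2) * (∫ y, b y ^ 2 ∂μ)^((1:ℝ)/2))^2 := by
      rw [← sq_abs (∫ y, f y ∂μ)]
      apply pow_le_pow_left₀ (abs_nonneg _) (habs.trans holder)
    calc (∫ y, f y ∂μ)^2 ≤ _ := h1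
      _ = (∫ y, a y ^ 2 ∂μ) * (∫ y, b y ^ 2 ∂μ) := by
          rw [mul_pow, rpow_half_sq hIa, rpow_half_sq hIb]
  have ea : (∫ y, a y ^ 2 ∂μ) = ∫ y in s, (y^2+1) ^ (-(3:ℝ)/2) :=
    integral_congr_ae (Eventually.of_forall fun y => ha2 y)
  have eb : (∫ y, b y ^ 2 ∂μ) ≤ ∫ x, (x^2+1) ^ ((3:ℝ)/2) * (f x)^2 := by
    have : (∫ y, b y ^ 2 ∂μ) = ∫ y in s, (y^2+1) ^ ((3:ℝ)/2) * (f y)^2 :=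
      integral_congr_ae (Eventually.of_forall fun y => hb2 y)
    rw [this]
    exact setIntegral_le_integral hI (Eventually.of_forall fun y => by positivity)
  calc (∫ y in s, f y)^2 = (∫ y, f y ∂μ)^2 := rfl
    _ ≤ (∫ y, a y ^ 2 ∂μ) * (∫ y, b y ^ 2 ∂μ) := step
    _ ≤ (∫ y in s, (y^2+1) ^ (-(3:ℝ)/2)) * ∫ x, (x^2+1) ^ ((3:ℝ)/2) * (f x)^2 := by
        rw [ea]
        apply mul_le_mul_of_nonneg_left eb
        exact ea ▸ hIa


/-- if `f` is measurable with `∫(x²+1)^{3/2}f² < ∞` and `∫f = 0`, then the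
anti-derivative `F(x) = ∫_{-∞}^x f` lies in `L²(ℝ)`, with
`‖F‖²_{L²} ≤ C ∫(x²+1)^{3/2}f²` for an absolute constant `C`. -/
theorem stmt17 :
    ∃ C : ℝ, 0 < C ∧
    ∀ f : ℝ → ℝ, Measurable f →
      Integrable (fun x => (x^2 + 1) ^ ((3:ℝ)/2) * (f x)^2) →
      (∫ x : ℝ, f x) = 0 →
      MemLp (fun x => ∫ y in Set.Iic x, f y) 2 (volume : Measure ℝ) ∧
      (∫ x : ℝ, (∫ y in Set.Iic x, f y)^2)
        ≤ C * ∫ x : ℝ, (x^2 + 1) ^ ((3:ℝ)/2) * (f x)^2 := by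
  refine ⟨π, Real.pi_pos, ?_⟩
  intro f hf hI hzero
  set I := ∫ x : ℝ, (x^2 + 1) ^ ((3:ℝ)/2) * (f x)^2 with hIdef
  have hInn : 0 ≤ I := integral_nonneg fun x => by positivity
  have hfint : Integrable f := by
    apply Integrable.mono' ((hI.add v_integrable).div_const 2) hf.aestronglyMeasurable
    filter_upwards with x
    rw [Real.norm_eq_abs]
    have hw : (0:ℝ) < (x^2+1) ^ ((3:ℝ)/2) := by positivity
    have hwv : (x^2+1) ^ ((3:ℝ)/2) * (x^2+1) ^ (-(3:ℝ)/2) = 1 := by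
      rw [← Real.rpow_add (by positivity)]; norm_num
    have hv0 : (0:ℝ) ≤ (x^2+1) ^ (-(3:ℝ)/2) := by positivity
    show |f x| ≤ ((x^2+1) ^ ((3:ℝ)/2) * f x ^ 2 + (x^2+1) ^ (-(3:ℝ)/2)) / 2
    rw [le_div_iff₀ (by norm_num : (0:ℝ) < 2), ← mul_le_mul_iff_of_pos_right hw]
    have habs2 : ((x^2+1) ^ ((3:ℝ)/2))^2 * f x^2 = ((x^2+1) ^ ((3:ℝ)/2) * |f x|)^2 := by
      rw [mul_pow, sq_abs]
    nlinarith [sq_nonneg ((x^2+1) ^ ((3:ℝ)/2) * |f x| - 1), habs2, hwv]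
  have key : ∀ x : ℝ, (∫ y in Iic x, f y)^2 ≤ I * (1 + x^2)⁻¹ := by
    intro x
    have hcomm : (x^2+1:ℝ)⁻¹ = (1+x^2)⁻¹ := by ring_nf
    rcases le_or_gt x 0 with hx | hx
    · calc (∫ y in Iic x, f y)^2
          ≤ (∫ y in Iic x, (y^2+1) ^ (-(3:ℝ)/2)) * I := cs_bound f hf hI (Iic x)
        _ ≤ (x^2+1)⁻¹ * I := mul_le_mul_of_nonneg_right (tail_Iic hx) hInn
        _ = I * (1+x^2)⁻¹ := by rw [hcomm, mul_comm]
    · have hFeq : (∫ y in Iic x, f y) = - ∫ y in Ioi x, f y := by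
        have h := intervalIntegral.integral_Iic_add_Ioi (b := x) hfint.integrableOn hfint.integrableOn
        rw [hzero] at h
        linarith
      rw [hFeq, neg_sq]
      calc (∫ y in Ioi x, f y)^2
          ≤ (∫ y in Ioi x, (y^2+1) ^ (-(3:ℝ)/2)) * I := cs_bound f hf hI (Ioi x)
        _ ≤ (x^2+1)⁻¹ * I := mul_le_mul_of_nonneg_right (tail_Ioi hx.le) hInn
        _ = I * (1+x^2)⁻¹ := by rw [hcomm, mul_comm]
  have hFcont : Continuous (fun x => ∫ y in Iic x, f y) := by
    have heqF : (fun x => ∫ y in Iic x, f y)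
        = fun x => (∫ y in Iic (0:ℝ), f y) + ∫ t in (0:ℝ)..x, f t := by
      funext x
      rw [← intervalIntegral.integral_Iic_sub_Iic hfint.integrableOn hfint.integrableOn]
      ring
    rw [heqF]
    exact continuous_const.add (hfint.continuous_primitive 0)
  have hFsq_int : Integrable (fun x => (∫ y in Iic x, f y)^2) := by
    apply Integrable.mono' ((integrable_inv_one_add_sq).const_mul I)
      ((hFcont.pow 2).aestronglyMeasurable)
    filter_upwards with x
    simp only [Pi.pow_apply]
    rw [Real.norm_of_nonneg (sq_nonneg _)]
    exact key x
  constructor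
  · exact (memLp_two_iff_integrable_sq hFcont.aestronglyMeasurable).2
      (hFsq_int.congr (by filter_upwards with x using by simp [Pi.pow_apply]))
  · calc (∫ x : ℝ, (∫ y in Iic x, f y)^2)
        ≤ ∫ x : ℝ, I * (1 + x^2)⁻¹ :=
          integral_mono hFsq_int ((integrable_inv_one_add_sq).const_mul I) key
      _ = I * π := by rw [integral_const_mul, integral_univ_inv_one_add_sq]
      _ = π * I := mul_comm _ _
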